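/- Assume additionally Condition (IV): 2 + p·b·(1 − p·(b−a)) ≥ 0. Then for every ν ∈ [μ*, λ*] one has 2 + p·(2b − a + (1+b·p)·(ν − λ*)) > 0, and consequently the function g(ν) := 1 − ν + ((1+b·p)·(ν − λ*) − a)·e^{p(ν−1)} is strictly convex on the interval [μ*, λ*]. -/

import Mathlib

/-- `μ* = 1 + (1/p)·log(1/(1+b·p))`. -/
noncomputable def mustar (b p : ℝ) : ℝ := 1 + (1 / p) * Real.log (1 / (1 + b * p))

/-- `λ* = 1 + (1/p)·log((1+(b−a)·p)/(1+b·p))`. -/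
noncomputable def lamstar (a b p : ℝ) : ℝ :=
  1 + (1 / p) * Real.log ((1 + (b - a) * p) / (1 + b * p))

/-- under Condition (IV), for every `ν ∈ [μ*, λ*]` one has
`2 + p·(2b − a + (1+b·p)·(ν − λ*)) > 0`, and consequently
`g(ν) := 1 − ν + ((1+b·p)·(ν − λ*) − a)·e^{p(ν−1)}` is strictly convex on `[μ*, λ*]`. -/
theorem stmt_16 (a b p : ℝ) (ha : 0 < a) (ha1 : a < 1) (hb : 1 < b) (hp : 0 < p)
    (hIV : 0 ≤ 2 + p * b * (1 - p * (b - a))) :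
    (∀ ν ∈ Set.Icc (mustar b p) (lamstar a b p),
        0 < 2 + p * (2 * b - a + (1 + b * p) * (ν - lamstar a b p))) ∧
      StrictConvexOn ℝ (Set.Icc (mustar b p) (lamstar a b p))
        (fun ν => 1 - ν + ((1 + b * p) * (ν - lamstar a b p) - a) * Real.exp (p * (ν - 1))) := by
  set lam := lamstar a b p with hlam
  set mu := mustar b p with hmu
  have hd : (0:ℝ) < 1 + b * p := by nlinarith
  have hc : (1:ℝ) < 1 + (b - a) * p := by nlinarith
  have hdiff : lam - mu = (1 / p) * Real.log (1 + (b - a) * p) := by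
    rw [hlam, hmu, lamstar, mustar]
    rw [Real.log_div (by positivity) (by positivity), Real.log_div (by positivity) (by positivity),
      Real.log_one]
    ring
  -- key positivity claim
  have key : ∀ ν ∈ Set.Icc mu lam,
      0 < 2 + p * (2 * b - a + (1 + b * p) * (ν - lam)) := by
    intro ν hν
    have hν1 : mu ≤ ν := hν.1
    have hlog : Real.log (1 + (b - a) * p) < (b - a) * p := by
      have := Real.log_lt_sub_one_of_pos (by linarith : (0:ℝ) < 1 + (b - a) * p)
        (by linarith : (1:ℝ) + (b - a) * p ≠ 1)
      linarith
    have hνlam : lam - ν ≤ (1 / p) * Real.log (1 + (b - a) * p) := by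
      rw [← hdiff]; linarith
    have h1 : p * (lam - ν) ≤ Real.log (1 + (b - a) * p) := by
      have := mul_le_mul_of_nonneg_left hνlam (le_of_lt hp)
      field_simp at this ⊢
      linarith
    have h2 : p * (lam - ν) < (b - a) * p := lt_of_le_of_lt h1 hlog
    -- 2 + p(2b-a) - (1+bp)·p(lam-ν) ≥ 2 + p(2b-a) - (1+bp)(b-a)p > 0? use hIV
    nlinarith [mul_lt_mul_of_pos_left h2 hd]
  refine ⟨key, ?_⟩
  apply strictConvexOn_of_deriv2_pos' (convex_Icc _ _)
  · fun_prop
  · intro ν hν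
    -- compute second derivative
    have hexp : ∀ x : ℝ, HasDerivAt (fun y => Real.exp (p * (y - 1)))
        (p * Real.exp (p * (x - 1))) x := by
      intro x
      have : HasDerivAt (fun y : ℝ => p * (y - 1)) p x := by
        simpa using ((hasDerivAt_id x).sub_const 1).const_mul p
      simpa [mul_comm] using this.exp
    have hder1 : ∀ x : ℝ, HasDerivAt
        (fun y => 1 - y + ((1 + b * p) * (y - lam) - a) * Real.exp (p * (y - 1)))
        (-1 + ((1 + b * p) + p * ((1 + b * p) * (x - lam) - a)) * Real.exp (p * (x - 1))) x := by
      intro x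
      have h1 : HasDerivAt (fun y : ℝ => (1 + b * p) * (y - lam) - a) (1 + b * p) x := by
        simpa using (((hasDerivAt_id x).sub_const lam).const_mul (1 + b * p)).sub_const a
      have h2 := (h1.mul (hexp x))
      have h3 := ((hasDerivAt_const x (1:ℝ)).sub (hasDerivAt_id x)).add h2
      exact h3.congr_deriv (by ring)
    have hd1 : deriv (fun y => 1 - y + ((1 + b * p) * (y - lam) - a) * Real.exp (p * (y - 1)))
        = fun x => -1 + ((1 + b * p) + p * ((1 + b * p) * (x - lam) - a)) * Real.exp (p * (x - 1)) := by
      funext x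
      exact (hder1 x).deriv
    have hder2 : HasDerivAt
        (fun x => -1 + ((1 + b * p) + p * ((1 + b * p) * (x - lam) - a)) * Real.exp (p * (x - 1)))
        (p * Real.exp (p * (ν - 1)) * (2 + p * (2 * b - a + (1 + b * p) * (ν - lam)))) ν := by
      have h1 : HasDerivAt (fun y : ℝ => (1 + b * p) + p * ((1 + b * p) * (y - lam) - a))
          (p * (1 + b * p)) ν := by
        simpa using (((((hasDerivAt_id ν).sub_const lam).const_mul (1 + b * p)).sub_const a).const_mul p).const_add (1 + b * p)
      have h2 := (h1.mul (hexp ν)).const_add (-1 : ℝ)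
      exact h2.congr_deriv (by ring)
    have : deriv^[2] (fun y => 1 - y + ((1 + b * p) * (y - lam) - a) * Real.exp (p * (y - 1))) ν
        = p * Real.exp (p * (ν - 1)) * (2 + p * (2 * b - a + (1 + b * p) * (ν - lam))) := by
      simp only [Function.iterate_succ, Function.iterate_zero, Function.comp_apply, id_eq, hd1]
      exact hder2.deriv
    rw [this]
    have := key ν hν
    positivity
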